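/- Let 𝕋 = ℝ/ℤ be the circle group (AddCircle 1) with its Haar probability measure, and for m ∈ ℤ let e_m ∈ L²(𝕋) denote the character e_m(x) = e^{2πimx}. Let K : 𝕋 → ℂ be measurable with 0 < essinf_{x} |K(x)| and esssup_{x} |K(x)| < ∞. Then: (i) the families (n ↦ e_{−n}·K) and (n ↦ e_{−n}/conj(K)) in L²(𝕋) are biorthogonal, i.e. ⟨e_{−n}·K, e_{−m}/conj(K)⟩ = δ_{n,m} for all n, m ∈ ℤ; and (ii) for every F ∈ L²(𝕋), the family (n ↦ ⟨F, e_{−n}·K⟩ · (e_{−n}/conj(K))) over n ∈ ℤ has sum F in L²(𝕋). -/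

import Mathlib

noncomputable section
open MeasureTheory AddCircle
open scoped ComplexConjugate ENNReal

local notation "⟪" f ", " g "⟫" => @inner ℂ _ _ g f

local notation "𝕋" => AddCircle (1 : ℝ)
local notation "μ" => @haarAddCircle (1 : ℝ) _

namespace Stmt9Aux

variable {α : Type*} [MeasurableSpace α] {ν : Measure α}

theorem memLp_mul (g : α → ℂ) (hg : AEStronglyMeasurable g ν) (c : ℝ)
    (hbd : ∀ᵐ t ∂ν, ‖g t‖ ≤ c) (F : Lp ℂ 2 ν) :
    MemLp (fun t => g t * (F : α → ℂ) t) 2 ν := by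
  refine MemLp.of_le_mul (c := c) (Lp.memLp F) (hg.mul (Lp.aestronglyMeasurable F)) ?_
  filter_upwards [hbd] with t ht
  rw [norm_mul]
  exact mul_le_mul_of_nonneg_right ht (norm_nonneg _)

/-- Multiplication by an a.e.-bounded function as a continuous linear map on `L²`. -/
noncomputable def mulCLM (g : α → ℂ) (hg : AEStronglyMeasurable g ν) (c : ℝ)
    (hbd : ∀ᵐ t ∂ν, ‖g t‖ ≤ c) : Lp ℂ 2 ν →L[ℂ] Lp ℂ 2 ν :=
  LinearMap.mkContinuous
    { toFun := fun F => (memLp_mul g hg c hbd F).toLp _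
      map_add' := fun F G => by
        refine Lp.ext ?_
        filter_upwards [(memLp_mul g hg c hbd (F + G)).coeFn_toLp,
          (memLp_mul g hg c hbd F).coeFn_toLp, (memLp_mul g hg c hbd G).coeFn_toLp,
          Lp.coeFn_add F G,
          Lp.coeFn_add ((memLp_mul g hg c hbd F).toLp _) ((memLp_mul g hg c hbd G).toLp _)]
          with t h1 h2 h3 h4 h5
        simp only [h1, h4, h5, Pi.add_apply, h2, h3]
        ring
      map_smul' := fun a F => by
        refine Lp.ext ?_
        filter_upwards [(memLp_mul g hg c hbd (a • F)).coeFn_toLp,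
          (memLp_mul g hg c hbd F).coeFn_toLp, Lp.coeFn_smul a F,
          Lp.coeFn_smul a ((memLp_mul g hg c hbd F).toLp _)] with t h1 h2 h3 h4
        simp only [RingHom.id_apply, h1, h4, Pi.smul_apply, h2, h3, smul_eq_mul]
        ring }
    c
    (by
      intro F
      show ‖((memLp_mul g hg c hbd F).toLp _ : Lp ℂ 2 ν)‖ ≤ c * ‖F‖
      refine Lp.norm_le_mul_norm_of_ae_le_mul ?_
      filter_upwards [(memLp_mul g hg c hbd F).coeFn_toLp, hbd] with t h1 h2
      rw [h1, norm_mul]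
      exact mul_le_mul_of_nonneg_right h2 (norm_nonneg _))

theorem coeFn_mulCLM (g : α → ℂ) (hg : AEStronglyMeasurable g ν) (c : ℝ)
    (hbd : ∀ᵐ t ∂ν, ‖g t‖ ≤ c) (F : Lp ℂ 2 ν) :
    (mulCLM g hg c hbd F : α → ℂ) =ᵐ[ν] fun t => g t * (F : α → ℂ) t :=
  (memLp_mul g hg c hbd F).coeFn_toLp

end Stmt9Aux

open Stmt9Aux

theorem stmt9 (K : 𝕋 → ℂ) (hK : Measurable K)
    (hK0 : 0 < essInf (fun t : 𝕋 => (‖K t‖₊ : ℝ≥0∞)) μ)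
    (hKtop : essSup (fun t : 𝕋 => (‖K t‖₊ : ℝ≥0∞)) μ < ⊤)
    (xK yK : ℤ → Lp ℂ 2 μ)
    (hxK : ∀ n : ℤ, (xK n : 𝕋 → ℂ) =ᵐ[μ] fun t => fourier (-n) t * K t)
    (hyK : ∀ n : ℤ, (yK n : 𝕋 → ℂ) =ᵐ[μ] fun t => fourier (-n) t / conj (K t)) :
    (∀ n m : ℤ, ⟪xK n, yK m⟫ = if n = m then (1 : ℂ) else 0) ∧
      ∀ F : Lp ℂ 2 μ, HasSum (fun n : ℤ => ⟪F, xK n⟫ • yK n) F := by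
  -- lower bound
  obtain ⟨c, hc0e, hcI⟩ := ENNReal.lt_iff_exists_nnreal_btwn.mp hK0
  have hc0 : 0 < c := by exact_mod_cast hc0e
  have hinfle : ∀ᵐ t ∂μ, essInf (fun t : 𝕋 => (‖K t‖₊ : ℝ≥0∞)) μ ≤ (‖K t‖₊ : ℝ≥0∞) :=
    ae_essInf_le
  have hlow : ∀ᵐ t ∂μ, (c : ℝ) ≤ ‖K t‖ := by
    filter_upwards [hinfle] with t ht
    have h : (c : ℝ≥0∞) ≤ (‖K t‖₊ : ℝ≥0∞) := le_trans hcI.le ht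
    exact_mod_cast h
  have hKne : ∀ᵐ t ∂μ, K t ≠ 0 := by
    filter_upwards [hlow] with t ht h0
    rw [h0, norm_zero] at ht
    exact absurd (lt_of_lt_of_le hc0 (by exact_mod_cast ht)) (lt_irrefl 0)
  -- upper bound
  obtain ⟨C, hC1, -⟩ := ENNReal.lt_iff_exists_nnreal_btwn.mp hKtop
  have hCub : ∀ᵐ t ∂μ, ‖K t‖ ≤ (C : ℝ) := by
    have hsup : ∀ᵐ t ∂μ, (‖K t‖₊ : ℝ≥0∞) ≤ essSup (fun t : 𝕋 => (‖K t‖₊ : ℝ≥0∞)) μ :=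
      ae_le_essSup
    filter_upwards [hsup] with t ht
    have h : (‖K t‖₊ : ℝ≥0∞) ≤ (C : ℝ≥0∞) := le_trans ht hC1.le
    exact_mod_cast h
  -- the multiplier g = (conj K)⁻¹
  set g : 𝕋 → ℂ := fun t => (conj (K t))⁻¹ with hg_def
  have hgm : AEStronglyMeasurable g μ :=
    ((Complex.continuous_conj.measurable.comp hK).inv).aestronglyMeasurable
  have hgbd : ∀ᵐ t ∂μ, ‖g t‖ ≤ (c : ℝ)⁻¹ := by
    filter_upwards [hlow] with t ht
    have hKt : (0 : ℝ) < ‖K t‖ := lt_of_lt_of_le (by exact_mod_cast hc0) ht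
    rw [hg_def, norm_inv, RCLike.norm_conj]
    exact inv_anti₀ (by exact_mod_cast hc0) ht
  have hKm : AEStronglyMeasurable (fun t => conj (K t)) μ :=
    (Complex.continuous_conj.measurable.comp hK).aestronglyMeasurable
  have hKbd : ∀ᵐ t ∂μ, ‖conj (K t)‖ ≤ (C : ℝ) := by
    filter_upwards [hCub] with t ht
    rwa [RCLike.norm_conj]
  set T := mulCLM g hgm ((c : ℝ)⁻¹) hgbd with hT_def
  set S := mulCLM (fun t => conj (K t)) hKm (C : ℝ) hKbd with hS_def
  -- T maps fourierLp to yK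
  have hT_fourier : ∀ n : ℤ, T (fourierLp 2 n) = yK (-n) := by
    intro n
    refine Lp.ext ?_
    filter_upwards [coeFn_mulCLM g hgm ((c : ℝ)⁻¹) hgbd (fourierLp 2 n),
      coeFn_fourierLp 2 n, hyK (-n)] with t h1 h2 h3
    rw [h1, h2, h3]
    simp [hg_def, neg_neg, div_eq_mul_inv, mul_comm]
  constructor
  · -- biorthogonality
    intro n m
    have key : ⟪xK n, yK m⟫ = @inner ℂ _ _ (fourierLp 2 (-m) : Lp ℂ 2 μ) (fourierLp 2 (-n)) := by
      rw [MeasureTheory.L2.inner_def, MeasureTheory.L2.inner_def]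
      refine integral_congr_ae ?_
      filter_upwards [hxK n, hyK m, coeFn_fourierLp 2 (-n), coeFn_fourierLp 2 (-m), hKne]
        with t h1 h2 h3 h4 h5
      rw [RCLike.inner_apply, RCLike.inner_apply, h1, h2, h3, h4]
      have h6 : conj (K t) ≠ 0 := by simpa using h5
      rw [map_div₀, Complex.conj_conj, mul_assoc, mul_div_assoc', mul_div_cancel_left₀ _ h5]
    rw [key, orthonormal_iff_ite.mp orthonormal_fourier (-m) (-n)]
    simp only [neg_inj]
    by_cases h : n = m
    · simp [h]
    · simp [h, Ne.symm h]
  · -- completeness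
    intro F
    set G := S F with hG_def
    have hGcoe : (G : 𝕋 → ℂ) =ᵐ[μ] fun t => conj (K t) * (F : 𝕋 → ℂ) t :=
      coeFn_mulCLM _ hKm (C : ℝ) hKbd F
    -- T G = F
    have hTG : T G = F := by
      refine Lp.ext ?_
      filter_upwards [coeFn_mulCLM g hgm ((c : ℝ)⁻¹) hgbd G, hGcoe, hKne] with t h1 h2 h3
      rw [h1, h2]
      have h4 : conj (K t) ≠ 0 := by simpa using h3
      simp only [hg_def]
      rw [inv_mul_cancel_left₀ h4]
    -- repr of G matches coefficients
    have hrepr : ∀ n : ℤ, (fourierBasis.repr G) (-n) = ⟪F, xK n⟫ := by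
      intro n
      rw [fourierBasis_repr, MeasureTheory.L2.inner_def]
      unfold fourierCoeff
      refine integral_congr_ae ?_
      filter_upwards [hGcoe, hxK n] with t h1 h2
      rw [RCLike.inner_apply, h1, h2, neg_neg]
      simp only [smul_eq_mul, map_mul, ← fourier_neg, neg_neg]
      ring
    have h1 : HasSum (fun n : ℤ => (fourierBasis.repr G) n • (fourierLp 2 n : Lp ℂ 2 μ)) G := by
      have := fourierBasis.hasSum_repr G
      rwa [coe_fourierBasis] at this
    have h2 : HasSum (fun n : ℤ => (fourierBasis.repr G) n • yK (-n)) F := by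
      have h3 := T.hasSum h1
      rw [hTG] at h3
      simpa only [ContinuousLinearMap.map_smul, hT_fourier] using h3
    have h4 : HasSum ((fun n : ℤ => (fourierBasis.repr G) n • yK (-n)) ∘ (Equiv.neg ℤ)) F :=
      ((Equiv.neg ℤ).hasSum_iff).mpr h2
    have heq : (fun n : ℤ => ⟪F, xK n⟫ • yK n)
        = (fun n : ℤ => (fourierBasis.repr G) n • yK (-n)) ∘ (Equiv.neg ℤ) := by
      funext n
      simp only [Function.comp_apply, Equiv.neg_apply, neg_neg, hrepr n]
    rwa [← heq] at h4
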